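/- arXiv:2409.11574 — 5 statements merged into one kernel-verified Lean document; each statement's English description precedes it below -/
import Mathlib

section
/- Let m ≥ 3 be an integer and let χ be an edge-coloring of the complete graph K_n. Suppose u, v are distinct vertices, i ≠ j are colors with χ(uv) = i, and let W = {w : χ(uw) = j and χ(vw) = i}. Let N₀ be a natural number such that every edge-coloring of a complete graph on N₀ vertices using at most 2 colors contains a monochromatic clique of order m−1. If |W| ≥ N₀, then the set {u, v} ∪ W contains either a lexical clique of order 4 containing both u and v, or a monochromatic clique of order m containing u or v. -/
/-- An edge-coloring of `K_n` (vertex set `Fin n`) with colors in `α` is a function on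
unordered pairs. `MonoIn χ t A` says there is a monochromatic clique of order `t`
inside the vertex set `A`. -/
def MonoIn {n : ℕ} {α : Type*} (χ : Sym2 (Fin n) → α) (t : ℕ) (A : Set (Fin n)) : Prop :=
  ∃ e : Fin t ↪ Fin n, (∀ k, e k ∈ A) ∧
    ∃ c, ∀ i j : Fin t, i ≠ j → χ s(e i, e j) = c

/-- A rainbow clique of order `t` inside the vertex set `A`: all edges get
pairwise distinct colors. -/
def RainbowIn {n : ℕ} {α : Type*} (χ : Sym2 (Fin n) → α) (t : ℕ) (A : Set (Fin n)) : Prop :=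
  ∃ e : Fin t ↪ Fin n, (∀ k, e k ∈ A) ∧
    ∀ i j i' j' : Fin t, i < j → i' < j' →
      χ s(e i, e j) = χ s(e i', e j') → i = i' ∧ j = j'

/-- An orderable clique of order `t` inside the vertex set `A`: there is an
enumeration `v_1, …, v_t` with `χ(v_i v_j) = χ(v_i v_k)` whenever `i < j < k`. -/
def OrderableIn {n : ℕ} {α : Type*} (χ : Sym2 (Fin n) → α) (t : ℕ) (A : Set (Fin n)) : Prop :=
  ∃ e : Fin t ↪ Fin n, (∀ k, e k ∈ A) ∧
    ∀ i j k : Fin t, i < j → j < k → χ s(e i, e j) = χ s(e i, e k)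

/-- A lexical clique of order `t` inside the vertex set `A`: there is an
enumeration `v_1, …, v_t` such that for `i < j` and `i' < j'`,
`χ(v_i v_j) = χ(v_i' v_j')` iff `i = i'`. -/
def LexicalIn {n : ℕ} {α : Type*} (χ : Sym2 (Fin n) → α) (t : ℕ) (A : Set (Fin n)) : Prop :=
  ∃ e : Fin t ↪ Fin n, (∀ k, e k ∈ A) ∧
    ∀ i j i' j' : Fin t, i < j → i' < j' →
      (χ s(e i, e j) = χ s(e i', e j') ↔ i = i')

def HasMonoClique {n : ℕ} {α : Type*} (χ : Sym2 (Fin n) → α) (t : ℕ) : Prop :=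
  MonoIn χ t Set.univ

def HasRainbowClique {n : ℕ} {α : Type*} (χ : Sym2 (Fin n) → α) (t : ℕ) : Prop :=
  RainbowIn χ t Set.univ

def HasOrderableClique {n : ℕ} {α : Type*} (χ : Sym2 (Fin n) → α) (t : ℕ) : Prop :=
  OrderableIn χ t Set.univ

def HasLexicalClique {n : ℕ} {α : Type*} (χ : Sym2 (Fin n) → α) (t : ℕ) : Prop :=
  LexicalIn χ t Set.univ

/-- Claim 1: if `u ∈ N_i(v)` and `|N_j(u) ∩ N_i(v)| ≥ R(m−1)`, then `{u,v} ∪ (N_j(u) ∩ N_i(v))`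
contains a lexical `K_4` through `u` and `v`, or a monochromatic `K_m` through `u` or `v`. -/
theorem statement_6 {n : ℕ} (m : ℕ) (hm : 3 ≤ m) (χ : Sym2 (Fin n) → ℕ)
    (u v : Fin n) (huv : u ≠ v) (i j : ℕ) (hij : i ≠ j) (huvcol : χ s(u, v) = i)
    (W : Finset (Fin n))
    (hW : W = Finset.univ.filter
      (fun w => w ≠ u ∧ χ s(u, w) = j ∧ w ≠ v ∧ χ s(v, w) = i))
    (N₀ : ℕ)
    (hN₀ : ∀ κ : Sym2 (Fin N₀) → Fin 2, HasMonoClique κ (m - 1))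
    (hWcard : N₀ ≤ W.card) :
    (∃ e : Fin 4 ↪ Fin n,
        (∀ k, e k ∈ insert u (insert v (W : Set (Fin n)))) ∧
        u ∈ Set.range e ∧ v ∈ Set.range e ∧
        ∀ a b a' b' : Fin 4, a < b → a' < b' →
          (χ s(e a, e b) = χ s(e a', e b') ↔ a = a')) ∨
    (∃ e : Fin m ↪ Fin n,
        (∀ k, e k ∈ insert u (insert v (W : Set (Fin n)))) ∧
        (u ∈ Set.range e ∨ v ∈ Set.range e) ∧
        ∃ c, ∀ a b : Fin m, a ≠ b → χ s(e a, e b) = c) := by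
  have hmem : ∀ w ∈ W, w ≠ u ∧ χ s(u, w) = j ∧ w ≠ v ∧ χ s(v, w) = i := by
    subst hW; intro w hw; simpa using hw
  by_cases hA : ∃ w ∈ W, ∃ w' ∈ W, w ≠ w' ∧ χ s(w, w') ≠ i ∧ χ s(w, w') ≠ j
  · obtain ⟨w, hw, w', hw', hww', hki, hkj⟩ := hA
    obtain ⟨hwu, hwj, hwv, hwi⟩ := hmem w hw
    obtain ⟨hw'u, hw'j, hw'v, hw'i⟩ := hmem w' hw'
    left
    have h01 : χ s(v, u) = i := by rw [Sym2.eq_swap]; exact huvcol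
    have h02 : χ s(v, w) = i := hwi
    have h03 : χ s(v, w') = i := hw'i
    have h12 : χ s(u, w) = j := hwj
    have h13 : χ s(u, w') = j := hw'j
    have hki' : i ≠ χ s(w, w') := Ne.symm hki
    have hkj' : j ≠ χ s(w, w') := Ne.symm hkj
    have g0 : ![v, u, w, w'] 0 = v := rfl
    have g1 : ![v, u, w, w'] 1 = u := rfl
    have g2 : ![v, u, w, w'] 2 = w := rfl
    have g3 : ![v, u, w, w'] 3 = w' := rfl
    have M0 : ![i, j, χ s(w, w'), 0] (0 : Fin 4) = i := rfl
    have M1 : ![i, j, χ s(w, w'), 0] (1 : Fin 4) = j := rfl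
    have M2 : ![i, j, χ s(w, w'), 0] (2 : Fin 4) = χ s(w, w') := rfl
    have hinj : Function.Injective ![v, u, w, w'] := by
      intro a b h
      fin_cases a <;> fin_cases b <;> simp only [g0, g1, g2, g3] at h <;>
        first
        | rfl
        | (exact absurd h huv.symm)
        | (exact absurd h.symm huv.symm)
        | (exact absurd h.symm hwv)
        | (exact absurd h hwv)
        | (exact absurd h.symm hw'v)
        | (exact absurd h hw'v)
        | (exact absurd h.symm hwu)
        | (exact absurd h hwu)
        | (exact absurd h.symm hw'u)
        | (exact absurd h hw'u)
        | (exact absurd h hww')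
        | (exact absurd h.symm hww')
    have hcol : ∀ a b : Fin 4, a < b →
        χ s(![v, u, w, w'] a, ![v, u, w, w'] b) = ![i, j, χ s(w, w'), 0] a := by
      intro a b hab
      fin_cases a <;> fin_cases b <;>
        first
        | (exact absurd hab (by decide))
        | (simp only [g0, g1, g2, g3, M0, M1, M2]
           first | exact h01 | exact h02 | exact h03 | exact h12 | exact h13 | rfl)
    refine ⟨⟨![v, u, w, w'], hinj⟩, ?_, ⟨1, g1⟩, ⟨0, g0⟩, ?_⟩
    · intro k
      fin_cases k <;> simp [g0, g1, g2, g3, hw, hw']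
    · intro a b a' b' hab ha'b'
      simp only [Function.Embedding.coeFn_mk]
      rw [hcol a b hab, hcol a' b' ha'b']
      have ha2 : a.val ≤ 2 := by have := hab; have := b.isLt; omega
      have ha'2 : a'.val ≤ 2 := by have := ha'b'; have := b'.isLt; omega
      fin_cases a <;> fin_cases a' <;>
        first
        | (exact absurd ha2 (by decide))
        | (exact absurd ha'2 (by decide))
        | (simp only [M0, M1, M2] <;>
           first
             | exact iff_of_true rfl rfl
             | exact iff_of_false hij (by decide)
             | exact iff_of_false (Ne.symm hij) (by decide)
             | exact iff_of_false hki (by decide)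
             | exact iff_of_false hki' (by decide)
             | exact iff_of_false hkj (by decide)
             | exact iff_of_false hkj' (by decide))
  · -- all edges inside W are colored i or j
    have hA' : ∀ w ∈ W, ∀ w' ∈ W, w ≠ w' → χ s(w, w') = i ∨ χ s(w, w') = j := by
      intro w hw w' hw' hne
      by_contra hc
      push_neg at hc
      exact hA ⟨w, hw, w', hw', hne, hc.1, hc.2⟩
    right
    set f := W.orderEmbOfCardLe hWcard with hf
    have hfW : ∀ a, f a ∈ W := fun a => W.orderEmbOfCardLe_mem hWcard a
    let κ : Sym2 (Fin N₀) → Fin 2 :=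
      Sym2.lift ⟨fun x y => if χ s(f x, f y) = i then (0 : Fin 2) else 1,
        by intro x y; simp only; rw [Sym2.eq_swap]⟩
    obtain ⟨e', -, c, hc⟩ := hN₀ κ
    have hcval : ∀ a b : Fin N₀,
        κ s(a, b) = if χ s(f a, f b) = i then (0 : Fin 2) else 1 := by
      intro a b; simp only [κ, Sym2.lift_mk]
    have hfne : ∀ a b : Fin (m-1), a ≠ b → f (e' a) ≠ f (e' b) := by
      intro a b hab hh
      exact hab (e'.injective (f.injective hh))
    -- c = 0 : color i with v ; c = 1 : color j with u
    rcases (by omega : (c : ℕ) = 0 ∨ (c : ℕ) = 1) with hc0 | hc1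
    · -- color i, attach v
      have hcz : c = 0 := Fin.ext hc0
      have hi : ∀ a b : Fin (m-1), a ≠ b → χ s(f (e' a), f (e' b)) = i := by
        intro a b hab
        have h := hc a b hab
        rw [hcval, hcz] at h
        by_contra hne
        rw [if_neg hne] at h
        exact absurd h (by decide)
      refine ⟨⟨fun a => if h : (a : ℕ) = 0 then v
          else f (e' ⟨(a : ℕ) - 1, by have := a.isLt; omega⟩), ?_⟩, ?_, ?_, ?_⟩
      · intro a b hab
        by_cases ha : (a : ℕ) = 0 <;> by_cases hb : (b : ℕ) = 0
        · exact Fin.ext (by omega)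
        · simp only [Function.Embedding.coeFn_mk, dif_pos ha, dif_neg hb] at hab
          exact absurd hab.symm (hmem _ (hfW _)).2.2.1
        · simp only [Function.Embedding.coeFn_mk, dif_neg ha, dif_pos hb] at hab
          exact absurd hab (hmem _ (hfW _)).2.2.1
        · simp only [dif_neg ha, dif_neg hb] at hab
          have := e'.injective (f.injective hab)
          rw [Fin.mk.injEq] at this
          exact Fin.ext (by omega)
      · intro k
        by_cases hk : (k : ℕ) = 0
        · simp [hk]
        · dsimp only [DFunLike.coe]; simp only [Function.Embedding.coeFn_mk, dif_neg hk, Set.mem_insert_iff]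
          exact Or.inr (Or.inr (hfW _))
      · exact Or.inr ⟨⟨0, by omega⟩, by simp⟩
      · refine ⟨i, ?_⟩
        intro a b hab
        by_cases ha : (a : ℕ) = 0 <;> by_cases hb : (b : ℕ) = 0
        · exact absurd (Fin.ext (by omega : (a:ℕ) = (b:ℕ))) hab
        · dsimp only [DFunLike.coe]; simp only [Function.Embedding.coeFn_mk, dif_pos ha, dif_neg hb]
          exact (hmem _ (hfW _)).2.2.2
        · dsimp only [DFunLike.coe]; simp only [Function.Embedding.coeFn_mk, dif_neg ha, dif_pos hb]
          rw [Sym2.eq_swap]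
          exact (hmem _ (hfW _)).2.2.2
        · dsimp only [DFunLike.coe]; simp only [Function.Embedding.coeFn_mk, dif_neg ha, dif_neg hb]
          refine hi _ _ ?_
          intro h
          rw [Fin.mk.injEq] at h
          exact hab (Fin.ext (by omega))
    · -- color j, attach u
      have hcz : c = 1 := Fin.ext hc1
      have hj : ∀ a b : Fin (m-1), a ≠ b → χ s(f (e' a), f (e' b)) = j := by
        intro a b hab
        have h := hc a b hab
        rw [hcval, hcz] at h
        have hne : χ s(f (e' a), f (e' b)) ≠ i := by
          intro he
          rw [if_pos he] at h
          exact absurd h (by decide)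
        rcases hA' _ (hfW (e' a)) _ (hfW (e' b)) (hfne a b hab) with h' | h'
        · exact absurd h' hne
        · exact h'
      refine ⟨⟨fun a => if h : (a : ℕ) = 0 then u
          else f (e' ⟨(a : ℕ) - 1, by have := a.isLt; omega⟩), ?_⟩, ?_, ?_, ?_⟩
      · intro a b hab
        by_cases ha : (a : ℕ) = 0 <;> by_cases hb : (b : ℕ) = 0
        · exact Fin.ext (by omega)
        · simp only [Function.Embedding.coeFn_mk, dif_pos ha, dif_neg hb] at hab
          exact absurd hab.symm (hmem _ (hfW _)).1
        · simp only [Function.Embedding.coeFn_mk, dif_neg ha, dif_pos hb] at hab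
          exact absurd hab (hmem _ (hfW _)).1
        · simp only [dif_neg ha, dif_neg hb] at hab
          have := e'.injective (f.injective hab)
          rw [Fin.mk.injEq] at this
          exact Fin.ext (by omega)
      · intro k
        by_cases hk : (k : ℕ) = 0
        · simp [hk]
        · dsimp only [DFunLike.coe]; simp only [Function.Embedding.coeFn_mk, dif_neg hk, Set.mem_insert_iff]
          exact Or.inr (Or.inr (hfW _))
      · exact Or.inl ⟨⟨0, by omega⟩, by simp⟩
      · refine ⟨j, ?_⟩
        intro a b hab
        by_cases ha : (a : ℕ) = 0 <;> by_cases hb : (b : ℕ) = 0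
        · exact absurd (Fin.ext (by omega : (a:ℕ) = (b:ℕ))) hab
        · dsimp only [DFunLike.coe]; simp only [Function.Embedding.coeFn_mk, dif_pos ha, dif_neg hb]
          exact (hmem _ (hfW _)).2.1
        · dsimp only [DFunLike.coe]; simp only [Function.Embedding.coeFn_mk, dif_neg ha, dif_pos hb]
          rw [Sym2.eq_swap]
          exact (hmem _ (hfW _)).2.1
        · dsimp only [DFunLike.coe]; simp only [Function.Embedding.coeFn_mk, dif_neg ha, dif_neg hb]
          refine hj _ _ ?_
          intro h
          rw [Fin.mk.injEq] at h
          exact hab (Fin.ext (by omega))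
end

section
/- Let ℓ ≥ 4 and r ≥ 3 be integers and let χ be an edge-coloring of the complete graph K_n. Suppose u, v are distinct vertices with χ(uv) = i, and let W = {w : χ(uw) = i and χ(vw) = i}. Suppose N₀ is a natural number such that every edge-coloring of a complete graph on N₀ vertices contains a monochromatic clique of order 4, a lexical clique of order ℓ−1, or a rainbow clique of order r. If |W| ≥ N₀, then the set {u, v} ∪ W contains a monochromatic clique of order 4, a rainbow clique of order r, or a lexical clique of order ℓ. -/
/-- Claim 2: if `χ(uv) = i` and `|N_i(u) ∩ N_i(v)| ≥ ER(4, ℓ−1, r)`, then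
`{u,v} ∪ (N_i(u) ∩ N_i(v))` contains a monochromatic `K_4`, a rainbow `K_r`,
or a lexical `K_ℓ`. -/
theorem statement_7 {n : ℕ} (ℓ r : ℕ) (hℓ : 4 ≤ ℓ) (hr : 3 ≤ r)
    (χ : Sym2 (Fin n) → ℕ)
    (u v : Fin n) (huv : u ≠ v) (i : ℕ) (huvcol : χ s(u, v) = i)
    (W : Finset (Fin n))
    (hW : W = Finset.univ.filter
      (fun w => w ≠ u ∧ χ s(u, w) = i ∧ w ≠ v ∧ χ s(v, w) = i))
    (N₀ : ℕ)
    (hN₀ : ∀ κ : Sym2 (Fin N₀) → ℕ,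
      HasMonoClique κ 4 ∨ HasLexicalClique κ (ℓ - 1) ∨ HasRainbowClique κ r)
    (hWcard : N₀ ≤ W.card) :
    MonoIn χ 4 (insert u (insert v (W : Set (Fin n)))) ∨
    RainbowIn χ r (insert u (insert v (W : Set (Fin n)))) ∨
    LexicalIn χ ℓ (insert u (insert v (W : Set (Fin n)))) := by
  obtain ⟨m, rfl⟩ : ∃ m, ℓ = m + 1 := ⟨ℓ - 1, by omega⟩
  have hsymm : ∀ a b : Fin n, χ s(a, b) = χ s(b, a) := by
    intro a b; rw [Sym2.eq_swap]
  have hWmem : ∀ w ∈ W, w ≠ u ∧ χ s(u, w) = i ∧ w ≠ v ∧ χ s(v, w) = i := by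
    intro w hw; rw [hW] at hw; simpa using hw
  by_cases hmono : ∃ w ∈ W, ∃ w' ∈ W, w ≠ w' ∧ χ s(w, w') = i
  · obtain ⟨w, hw, w', hw', hne, hcol⟩ := hmono
    obtain ⟨hwu, hcuw, hwv, hcvw⟩ := hWmem w hw
    obtain ⟨hw'u, hcuw', hw'v, hcvw'⟩ := hWmem w' hw'
    left
    clear hW hN₀ hWmem hWcard
    refine ⟨⟨![u, v, w, w'], ?_⟩, ?_, i, ?_⟩
    · intro a b hab
      fin_cases a <;> fin_cases b <;>
        simp only [Fin.isValue, Matrix.cons_val_zero, Matrix.cons_val_one,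
          Matrix.head_cons, Matrix.cons_val_two, Matrix.tail_cons,
          Matrix.cons_val_three] at hab <;>
        first
          | rfl
          | exact absurd hab (by tauto)
          | exact absurd hab.symm (by tauto)
    · intro k
      fin_cases k <;>
        simp only [Fin.isValue, Matrix.cons_val_zero, Matrix.cons_val_one,
          Matrix.head_cons, Matrix.cons_val_two, Matrix.tail_cons,
          Matrix.cons_val_three] <;>
        first
          | exact Set.mem_insert _ _
          | exact Set.mem_insert_iff.2 (Or.inr (Set.mem_insert _ _))
          | exact Set.mem_insert_iff.2 (Or.inr (Set.mem_insert_iff.2 (Or.inr hw)))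
          | exact Set.mem_insert_iff.2 (Or.inr (Set.mem_insert_iff.2 (Or.inr hw')))
    · intro a b hab
      fin_cases a <;> fin_cases b <;>
        simp only [Fin.isValue, Matrix.cons_val_zero, Matrix.cons_val_one,
          Matrix.head_cons, Matrix.cons_val_two, Matrix.tail_cons,
          Matrix.cons_val_three] <;>
        first
          | exact absurd rfl hab
          | assumption
          | (rw [hsymm]; assumption)
  · push_neg at hmono
    obtain ⟨W', hW'sub, hW'card⟩ := Finset.exists_subset_card_eq hWcard
    set g := W'.orderIsoOfFin hW'card with hg
    have finj : Function.Injective (fun a : Fin N₀ => ((g a : Fin n))) := by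
      intro a b hab
      exact g.injective (Subtype.ext hab)
    set f : Fin N₀ ↪ Fin n := ⟨fun a => (g a : Fin n), finj⟩ with hf
    have hfW : ∀ a, f a ∈ W := fun a => hW'sub (g a).2
    have hfu : ∀ a, f a ≠ u := fun a => (hWmem _ (hfW a)).1
    have hfv : ∀ a, f a ≠ v := fun a => (hWmem _ (hfW a)).2.2.1
    have hfA : ∀ a, f a ∈ insert u (insert v (W : Set (Fin n))) := by
      intro a
      exact Set.mem_insert_iff.2 (Or.inr (Set.mem_insert_iff.2 (Or.inr (hfW a))))
    set κ : Sym2 (Fin N₀) → ℕ := fun p => χ (Sym2.map f p) with hκdef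
    have hκ : ∀ a b, κ s(a, b) = χ s(f a, f b) := by
      intro a b; simp [hκdef]
    have hfi : ∀ a b : Fin N₀, a ≠ b → χ s(f a, f b) ≠ i := by
      intro a b hab
      exact hmono _ (hfW a) _ (hfW b) (fun h => hab (f.injective h))
    rcases hN₀ κ with ⟨e, -, c, he⟩ | ⟨e, -, he⟩ | ⟨e, -, he⟩
    · left
      exact ⟨e.trans f, fun k => hfA _, c, fun a b hab => (hκ _ _).symm.trans (he a b hab)⟩
    · right; right
      -- lexical: prepend u
      have hE0 : (Fin.cases u (fun k => f (e k)) : Fin (m+1) → Fin n) 0 = u := rfl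
      have hEs : ∀ k, (Fin.cases u (fun k => f (e k)) : Fin (m+1) → Fin n) k.succ = f (e k) :=
        fun k => rfl
      have hEinj : Function.Injective (Fin.cases u (fun k => f (e k)) : Fin (m+1) → Fin n) := by
        intro a b hab
        induction a using Fin.cases with
        | zero =>
          induction b using Fin.cases with
          | zero => rfl
          | succ b =>
            simp only [Fin.cases_zero, Fin.cases_succ] at hab
            exact absurd hab.symm (hfu _)
        | succ a =>
          induction b using Fin.cases with
          | zero =>
            simp only [Fin.cases_zero, Fin.cases_succ] at hab
            exact absurd hab (hfu _)
          | succ b =>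
            simp only [Fin.cases_succ] at hab
            exact congrArg Fin.succ (e.injective (f.injective hab))
      refine ⟨⟨Fin.cases u (fun k => f (e k)), hEinj⟩, ?_, ?_⟩
      · intro k
        simp only [Function.Embedding.coeFn_mk]
        induction k using Fin.cases with
        | zero => exact Set.mem_insert _ _
        | succ k => simp only [Fin.cases_succ]; exact hfA (e k)
      · intro a b a' b' hab ha'b'
        simp only [Function.Embedding.coeFn_mk]
        obtain ⟨b₀, rfl⟩ := Fin.eq_succ_of_ne_zero
          (Fin.pos_iff_ne_zero.mp (lt_of_le_of_lt (Fin.zero_le a) hab))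
        obtain ⟨b₀', rfl⟩ := Fin.eq_succ_of_ne_zero
          (Fin.pos_iff_ne_zero.mp (lt_of_le_of_lt (Fin.zero_le a') ha'b'))
        induction a using Fin.cases with
        | zero =>
          induction a' using Fin.cases with
          | zero =>
            simp only [Fin.cases_zero, Fin.cases_succ]
            rw [(hWmem _ (hfW (e b₀))).2.1, (hWmem _ (hfW (e b₀'))).2.1]
            simp
          | succ a' =>
            have ha'b'' : a' ≠ b₀' := fun h => absurd (congrArg Fin.succ h) (ne_of_lt ha'b')
            simp only [Fin.cases_zero, Fin.cases_succ]
            rw [(hWmem _ (hfW (e b₀))).2.1]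
            constructor
            · intro h
              exact absurd h.symm (hfi _ _ (fun hh => ha'b'' (e.injective hh)))
            · intro h; exact absurd h.symm (Fin.succ_ne_zero a')
        | succ a =>
          induction a' using Fin.cases with
          | zero =>
            have hab'' : a ≠ b₀ := fun h => absurd (congrArg Fin.succ h) (ne_of_lt hab)
            simp only [Fin.cases_zero, Fin.cases_succ]
            rw [(hWmem _ (hfW (e b₀'))).2.1]
            constructor
            · intro h
              exact absurd h (hfi _ _ (fun hh => hab'' (e.injective hh)))
            · intro h; exact absurd h (Fin.succ_ne_zero a)
          | succ a' =>
            simp only [Fin.cases_succ]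
            rw [← hκ, ← hκ,
              he a b₀ a' b₀' (Fin.succ_lt_succ_iff.mp hab) (Fin.succ_lt_succ_iff.mp ha'b')]
            exact ⟨fun h => congrArg Fin.succ h, fun h => Fin.succ_injective _ h⟩
    · right; left
      exact ⟨e.trans f, fun k => hfA _, fun a b a' b' hab ha'b' h =>
        he a b a' b' hab ha'b' ((hκ _ _).trans (h.trans (hκ _ _).symm))⟩
end

section
/- Let ℓ ≥ 3 and r ≥ 3 be integers, and let N₁, N₂ be natural numbers. Suppose there exists an edge-coloring of the complete graph on N₁ vertices containing no monochromatic K_3, no lexical clique of order ℓ, and no rainbow clique of order r, and there exists an edge-coloring of the complete graph on N₂ vertices containing no monochromatic K_3, no lexical clique of order 3, and no rainbow clique of order r. Then there exists an edge-coloring of the complete graph on N₁·N₂ vertices containing no monochromatic K_3, no lexical clique of order ℓ+1, and no rainbow clique of order r. -/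
namespace S8Aux

lemma third3 : ∀ i j : Fin 3, i ≠ j → ∃ k : Fin 3, k ≠ i ∧ k ≠ j := by decide

lemma mem3 : ∀ i j k a : Fin 3, i ≠ j → k ≠ i → k ≠ j → a = i ∨ a = j ∨ a = k := by decide

lemma pairs3 : ∀ a b : Fin 3, a < b →
    (a = 0 ∧ b = 1) ∨ (a = 0 ∧ b = 2) ∨ (a = 1 ∧ b = 2) := by decide

def tri {m : ℕ} (i j k : Fin m) : Fin 3 → Fin m :=
  fun t => if t = 0 then i else if t = 1 then j else k

variable {N₁ N₂ : ℕ}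

def XX (v : Fin (N₁ * N₂)) : Fin N₁ := (finProdFinEquiv.symm v).1
def YY (v : Fin (N₁ * N₂)) : Fin N₂ := (finProdFinEquiv.symm v).2

lemma XY_inj {u v : Fin (N₁ * N₂)} (hx : XX u = XX v) (hy : YY u = YY v) : u = v :=
  finProdFinEquiv.symm.injective (Prod.ext hx hy)

def pc (χ₁ : Sym2 (Fin N₁) → ℕ) (χ₂ : Sym2 (Fin N₂) → ℕ) : Sym2 (Fin (N₁ * N₂)) → ℕ :=
  Sym2.lift ⟨fun u v => if XX u = XX v then 2 * χ₂ s(YY u, YY v) + 1 else 2 * χ₁ s(XX u, XX v),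
    by
      intro u v
      dsimp only
      rw [Sym2.eq_swap (a := YY u), Sym2.eq_swap (a := XX u)]
      by_cases h : XX u = XX v
      · rw [if_pos h, if_pos h.symm]
      · rw [if_neg h, if_neg (Ne.symm h)]⟩

lemma pc_same {χ₁ : Sym2 (Fin N₁) → ℕ} {χ₂ : Sym2 (Fin N₂) → ℕ} {u v : Fin (N₁ * N₂)}
    (h : XX u = XX v) : pc χ₁ χ₂ s(u, v) = 2 * χ₂ s(YY u, YY v) + 1 := by
  rw [pc, Sym2.lift_mk]; exact if_pos h

lemma pc_diff {χ₁ : Sym2 (Fin N₁) → ℕ} {χ₂ : Sym2 (Fin N₂) → ℕ} {u v : Fin (N₁ * N₂)}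
    (h : XX u ≠ XX v) : pc χ₁ χ₂ s(u, v) = 2 * χ₁ s(XX u, XX v) := by
  rw [pc, Sym2.lift_mk]; exact if_neg h

end S8Aux


open S8Aux in
/-- Product construction: ER(3, ℓ+1, r) ≥ (ER(3, ℓ, r) − 1)·(ER(3, 3, r) − 1) + 1. -/
theorem statement_8 (ℓ r : ℕ) (hℓ : 3 ≤ ℓ) (hr : 3 ≤ r) (N₁ N₂ : ℕ)
    (h₁ : ∃ χ₁ : Sym2 (Fin N₁) → ℕ,
      ¬ HasMonoClique χ₁ 3 ∧ ¬ HasLexicalClique χ₁ ℓ ∧ ¬ HasRainbowClique χ₁ r)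
    (h₂ : ∃ χ₂ : Sym2 (Fin N₂) → ℕ,
      ¬ HasMonoClique χ₂ 3 ∧ ¬ HasLexicalClique χ₂ 3 ∧ ¬ HasRainbowClique χ₂ r) :
    ∃ χ : Sym2 (Fin (N₁ * N₂)) → ℕ,
      ¬ HasMonoClique χ 3 ∧ ¬ HasLexicalClique χ (ℓ + 1) ∧ ¬ HasRainbowClique χ r := by
  obtain ⟨χ₁, hm₁, hl₁, hr₁⟩ := h₁
  obtain ⟨χ₂, hm₂, hl₂, hr₂⟩ := h₂
  refine ⟨pc χ₁ χ₂, ?_, ?_, ?_⟩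
  · -- no mono K₃
    rintro ⟨e, -, c, hc⟩
    by_cases hdist : ∀ i j : Fin 3, i ≠ j → XX (e i) ≠ XX (e j)
    · -- all blocks distinct : mono K₃ in χ₁
      apply hm₁
      refine ⟨⟨fun k => XX (e k), ?_⟩, fun _ => trivial, χ₁ s(XX (e 0), XX (e 1)), ?_⟩
      · intro a b hab
        by_contra hne
        exact hdist a b hne hab
      · intro i j hij
        have h1 := hc i j hij
        have h2 := hc 0 1 (by decide)
        rw [pc_diff (hdist i j hij)] at h1
        rw [pc_diff (hdist 0 1 (by decide))] at h2
        show χ₁ s(XX (e i), XX (e j)) = χ₁ s(XX (e 0), XX (e 1))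
        omega
    · push_neg at hdist
      obtain ⟨i, j, hij, hxx⟩ := hdist
      obtain ⟨k, hki, hkj⟩ := third3 i j hij
      by_cases hk : XX (e k) = XX (e i)
      · -- all same block : mono K₃ in χ₂
        apply hm₂
        have h0 : ∀ a : Fin 3, XX (e a) = XX (e i) := by
          intro a
          rcases mem3 i j k a hij hki hkj with h | h | h
          · rw [h]
          · rw [h]; exact hxx.symm
          · rw [h]; exact hk
        have hall : ∀ a b : Fin 3, XX (e a) = XX (e b) := fun a b =>
          (h0 a).trans (h0 b).symm
        refine ⟨⟨fun a => YY (e a), ?_⟩, fun _ => trivial, χ₂ s(YY (e 0), YY (e 1)), ?_⟩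
        · intro a b hab
          exact e.injective (XY_inj (hall a b) hab)
        · intro a b hab
          have h1 := hc a b hab
          have h2 := hc 0 1 (by decide)
          rw [pc_same (hall a b)] at h1
          rw [pc_same (hall 0 1)] at h2
          show χ₂ s(YY (e a), YY (e b)) = χ₂ s(YY (e 0), YY (e 1))
          omega
      · -- edge (i,j) odd, edge (i,k) even : contradiction
        have h1 := hc i j hij
        have h2 := hc i k (fun h => hki h.symm)
        rw [pc_same hxx] at h1
        rw [pc_diff (fun h => hk h.symm)] at h2
        omega
  · -- no lexical K_{ℓ+1}
    rintro ⟨e, -, hlex⟩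
    by_cases H : ∀ i j : Fin (ℓ + 1), i < j → (j : ℕ) < ℓ → XX (e i) ≠ XX (e j)
    · -- build lexical K_ℓ in χ₁ via castSucc
      apply hl₁
      have hcs : ∀ i j : Fin ℓ, i < j → XX (e i.castSucc) ≠ XX (e j.castSucc) := by
        intro i j hij
        exact H i.castSucc j.castSucc (Fin.castSucc_lt_castSucc_iff.mpr hij)
          (by rw [Fin.coe_castSucc]; exact j.isLt)
      refine ⟨⟨fun k => XX (e k.castSucc), ?_⟩, fun _ => trivial, ?_⟩
      · intro a b hab
        by_contra hne
        rcases lt_trichotomy a b with h | h | h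
        · exact hcs a b h hab
        · exact hne h
        · exact hcs b a h hab.symm
      · intro i j i' j' hij hij'
        show χ₁ s(XX (e i.castSucc), XX (e j.castSucc)) = χ₁ s(XX (e i'.castSucc), XX (e j'.castSucc)) ↔ i = i'
        have key := hlex i.castSucc j.castSucc i'.castSucc j'.castSucc
          (Fin.castSucc_lt_castSucc_iff.mpr hij) (Fin.castSucc_lt_castSucc_iff.mpr hij')
        rw [pc_diff (hcs i j hij), pc_diff (hcs i' j' hij')] at key
        constructor
        · intro h
          have h2 : (2 : ℕ) * χ₁ s(XX (e i.castSucc), XX (e j.castSucc)) =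
              2 * χ₁ s(XX (e i'.castSucc), XX (e j'.castSucc)) := by omega
          exact Fin.castSucc_injective _ (key.mp h2)
        · intro h
          have h2 : i.castSucc = i'.castSucc := by rw [h]
          have := key.mpr h2
          omega
    · push_neg at H
      obtain ⟨i₀, j₀, hij₀, hj₀, hxx⟩ := H
      have htail : ∀ k : Fin (ℓ + 1), i₀ < k → XX (e i₀) = XX (e k) := by
        intro k hk
        by_contra hne
        have h1 := (hlex i₀ j₀ i₀ k hij₀ hk).mpr rfl
        rw [pc_same hxx, pc_diff hne] at h1
        omega
      apply hl₂
      have hlast : j₀ < Fin.last ℓ := by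
        rw [Fin.lt_def]; simpa using hj₀
      have hilast : i₀ < Fin.last ℓ := hij₀.trans hlast
      set g : Fin 3 → Fin (ℓ + 1) := tri i₀ j₀ (Fin.last ℓ) with hg
      have hg0 : g 0 = i₀ := rfl
      have hg1 : g 1 = j₀ := rfl
      have hg2 : g 2 = Fin.last ℓ := rfl
      have hgmono : ∀ a b : Fin 3, a < b → g a < g b := by
        intro a b hab
        rcases pairs3 a b hab with ⟨ha, hb⟩ | ⟨ha, hb⟩ | ⟨ha, hb⟩ <;>
          subst ha <;> subst hb <;>
          simp only [hg0, hg1, hg2]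
        · exact hij₀
        · exact hilast
        · exact hlast
      have h0 : ∀ c : Fin 3, XX (e i₀) = XX (e (g c)) := by
        intro c
        rcases mem3 0 1 2 c (by decide) (by decide) (by decide) with h | h | h <;> subst h
        · rfl
        · exact htail j₀ hij₀
        · exact htail (Fin.last ℓ) hilast
      have hsame : ∀ a b : Fin 3, XX (e (g a)) = XX (e (g b)) := fun a b =>
        (h0 a).symm.trans (h0 b)
      refine ⟨⟨fun a => YY (e (g a)), ?_⟩, fun _ => trivial, ?_⟩
      · intro a b hab
        rcases lt_trichotomy a b with h | h | h
        · exact ((hgmono a b h).ne (e.injective (XY_inj (hsame a b) hab))).elim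
        · exact h
        · exact ((hgmono b a h).ne (e.injective (XY_inj (hsame b a) hab.symm))).elim
      · intro a b a' b' hab hab'
        show χ₂ s(YY (e (g a)), YY (e (g b))) = χ₂ s(YY (e (g a')), YY (e (g b'))) ↔ a = a'
        have key := hlex (g a) (g b) (g a') (g b') (hgmono a b hab) (hgmono a' b' hab')
        rw [pc_same (hsame a b), pc_same (hsame a' b')] at key
        constructor
        · intro h
          have h2 : 2 * χ₂ s(YY (e (g a)), YY (e (g b))) + 1 =
              2 * χ₂ s(YY (e (g a')), YY (e (g b'))) + 1 := by omega
          have hgg := key.mp h2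
          by_contra hne
          rcases lt_trichotomy a a' with h' | h' | h'
          · exact (hgmono a a' h').ne hgg
          · exact hne h'
          · exact (hgmono a' a h').ne hgg.symm
        · intro h
          have h2 : g a = g a' := by rw [h]
          have := key.mpr h2
          omega
  · -- no rainbow K_r
    rintro ⟨e, -, hrb⟩
    by_cases hdist : ∀ i j : Fin r, i < j → XX (e i) ≠ XX (e j)
    · apply hr₁
      refine ⟨⟨fun k => XX (e k), ?_⟩, fun _ => trivial, ?_⟩
      · intro a b hab
        by_contra hne
        rcases lt_trichotomy a b with h | h | h
        · exact hdist a b h hab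
        · exact hne h
        · exact hdist b a h hab.symm
      · intro i j i' j' hij hij' heq
        change χ₁ s(XX (e i), XX (e j)) = χ₁ s(XX (e i'), XX (e j')) at heq
        apply hrb i j i' j' hij hij'
        rw [pc_diff (hdist i j hij), pc_diff (hdist i' j' hij')]
        omega
    · push_neg at hdist
      obtain ⟨i, j, hij, hxx⟩ := hdist
      have hall : ∀ k : Fin r, XX (e i) = XX (e k) := by
        intro k
        by_contra hne
        have hki : k ≠ i := fun h => hne (h ▸ rfl)
        have hkj : k ≠ j := fun h => hne (by rw [h]; exact hxx)
        have hxkj : XX (e j) ≠ XX (e k) := fun h => hne (hxx.trans h)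
        have hcol : pc χ₁ χ₂ s(e i, e k) = pc χ₁ χ₂ s(e j, e k) := by
          rw [pc_diff hne, pc_diff hxkj, hxx]
        rcases lt_trichotomy i k with h1 | h1 | h1
        · rcases lt_trichotomy j k with h2 | h2 | h2
          · exact hij.ne (hrb i k j k h1 h2 hcol).1
          · exact hkj h2.symm
          · rw [Sym2.eq_swap (a := e j) (b := e k)] at hcol
            exact h1.ne (hrb i k k j h1 h2 hcol).1
        · exact hki h1.symm
        · have h2 : k < j := h1.trans hij
          rw [Sym2.eq_swap (a := e i) (b := e k),
            Sym2.eq_swap (a := e j) (b := e k)] at hcol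
          exact hij.ne (hrb k i k j h1 h2 hcol).2
      apply hr₂
      refine ⟨⟨fun k => YY (e k), ?_⟩, fun _ => trivial, ?_⟩
      · intro a b hab
        exact e.injective (XY_inj ((hall a).symm.trans (hall b)) hab)
      · intro a b a' b' hab hab' heq
        change χ₂ s(YY (e a), YY (e b)) = χ₂ s(YY (e a'), YY (e b')) at heq
        apply hrb a b a' b' hab hab'
        rw [pc_same ((hall a).symm.trans (hall b)), pc_same ((hall a').symm.trans (hall b'))]
        omega
end

section
/- Let m ≥ 3 be an integer and let χ be an edge-coloring of the complete graph K_n. If χ contains no monochromatic clique of order m and no lexical clique of order 3, then every color class of χ has maximum degree at most m − 2; that is, for every vertex v and every color i, the number of vertices u ≠ v with χ(uv) = i is at most m − 2. -/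
/-- A coloring avoiding monochromatic `K_m` and lexical `K_3` is `(m−2)`-good. -/
theorem statement_10 {n : ℕ} (m : ℕ) (hm : 3 ≤ m) (χ : Sym2 (Fin n) → ℕ)
    (hmono : ¬ HasMonoClique χ m) (hlex : ¬ HasLexicalClique χ 3) :
    ∀ v : Fin n, ∀ i : ℕ,
      (Finset.univ.filter (fun u => u ≠ v ∧ χ s(u, v) = i)).card ≤ m - 2 := by
  intro v i
  by_contra hcard
  push_neg at hcard
  set N := Finset.univ.filter (fun u => u ≠ v ∧ χ s(u, v) = i) with hN
  have hmem : ∀ u ∈ N, u ≠ v ∧ χ s(u, v) = i := by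
    intro u hu; simpa [hN] using hu
  have claim : ∀ u ∈ N, ∀ w ∈ N, u ≠ w → χ s(u, w) = i := by
    intro u hu w hw huw
    by_contra hne
    obtain ⟨huv, hcu⟩ := hmem u hu
    obtain ⟨hwv, hcw⟩ := hmem w hw
    have hcu' : χ s(v, u) = i := by rwa [Sym2.eq_swap]
    have hcw' : χ s(v, w) = i := by rwa [Sym2.eq_swap]
    apply hlex
    have hinj : Function.Injective ![v, u, w] := by
      intro a b hab
      fin_cases a <;> fin_cases b <;> simp_all
    refine ⟨⟨![v, u, w], hinj⟩, fun _ => Set.mem_univ _, ?_⟩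
    have key : ∀ a b : Fin 3, a < b →
        χ s(![v, u, w] a, ![v, u, w] b) = if a = 0 then i else χ s(u, w) := by
      intro a b hab
      fin_cases a <;> fin_cases b <;>
        first
        | exact absurd hab (by decide)
        | simp [hcu', hcw']
    intro a b a' b' hab hab'
    simp only [Function.Embedding.coeFn_mk]
    rw [key a b hab, key a' b' hab']
    have ha1 : a = 0 ∨ a = 1 := by omega
    have ha1' : a' = 0 ∨ a' = 1 := by omega
    rcases ha1 with h1 | h1 <;> rcases ha1' with h2 | h2 <;>
      simp [h1, h2, hne, Ne.symm hne]
  have hle : m - 1 ≤ N.card := by omega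
  obtain ⟨T, hTN, hTcard⟩ := Finset.exists_subset_card_eq hle
  let g : Fin (m - 1) → Fin n := fun k => ((Finset.equivFinOfCardEq hTcard).symm k : Fin n)
  have hginj : Function.Injective g := by
    intro a b hab
    have := (Finset.equivFinOfCardEq hTcard).symm.injective (Subtype.ext hab)
    exact this
  have hgN : ∀ k, g k ∈ N := fun k => hTN ((Finset.equivFinOfCardEq hTcard).symm k).2
  let e : Fin m → Fin n := fun k => if h : (k : ℕ) < m - 1 then g ⟨k, h⟩ else v
  have hgv : ∀ k, g k ≠ v := fun k => (hmem _ (hgN k)).1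
  have heinj : Function.Injective e := by
    intro a b hab
    simp only [e] at hab
    by_cases ha : (a : ℕ) < m - 1 <;> by_cases hb : (b : ℕ) < m - 1 <;>
      simp [ha, hb] at hab
    · have := hginj hab
      exact Fin.ext (by simpa using congrArg Fin.val this)
    · exact absurd hab (hgv _)
    · exact absurd hab.symm (hgv _)
    · exact Fin.ext (by omega)
  apply hmono
  refine ⟨⟨e, heinj⟩, fun _ => Set.mem_univ _, i, ?_⟩
  intro a b hab
  simp only [Function.Embedding.coeFn_mk, e]
  by_cases ha : (a : ℕ) < m - 1 <;> by_cases hb : (b : ℕ) < m - 1 <;>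
    simp only [ha, hb, dif_pos, dif_neg, not_false_iff]
  · refine claim _ (hgN _) _ (hgN _) ?_
    intro hgeq
    exact hab (Fin.ext (by simpa using congrArg Fin.val (hginj hgeq)))
  · exact (hmem _ (hgN _)).2
  · rw [Sym2.eq_swap]; exact (hmem _ (hgN _)).2
  · exact absurd (Fin.ext (by omega : (a:ℕ) = b)) hab
end

section
/- For every integer t there exists a natural number n such that for every edge-coloring χ of the complete graph on the linearly ordered vertex set {1, 2, …, n}, there exists a set S of t vertices such that the restriction of χ to S is monochromatic, rainbow, upper lexical (two edges inside S have the same color if and only if they have the same larger endpoint), or lower lexical (two edges inside S have the same color if and only if they have the same smaller endpoint). -/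
open Classical in
theorem ramseyTuple (k : ℕ) {κ : Type} [Finite κ] :
    ∀ (f : (Fin k → ℕ) → κ) (S : Set ℕ), S.Infinite →
      ∃ T ⊆ S, T.Infinite ∧ ∃ c, ∀ v : Fin k → ℕ, StrictMono v → (∀ i, v i ∈ T) → f v = c := by
  induction k with
  | zero =>
    intro f S hS
    exact ⟨S, le_refl _, hS, f (fun i => i.elim0), fun v _ _ => by
      congr 1; funext i; exact i.elim0⟩
  | succ k IH =>
    intro f S hS
    -- the one-step lemma
    have exists_next : ∀ (S' : Set ℕ), S'.Infinite →
        ∃ p : ℕ × κ × Set ℕ, p.1 ∈ S' ∧ p.2.2 ⊆ S' ∧ p.2.2.Infinite ∧ (∀ x ∈ p.2.2, p.1 < x) ∧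
          (∀ v : Fin k → ℕ, StrictMono v → (∀ i, v i ∈ p.2.2) →
            f (Fin.cons p.1 v) = p.2.1) := by
      intro S' hS'
      obtain ⟨a, ha⟩ := hS'.nonempty
      have hinf : (S' \ Set.Iic a).Infinite := hS'.diff (Set.finite_Iic a)
      obtain ⟨T, hTsub, hTinf, c, hc⟩ := IH (fun v => f (Fin.cons a v)) _ hinf
      refine ⟨⟨a, c, T⟩, ha, fun x hx => (hTsub hx).1, hTinf, ?_, hc⟩
      intro x hx
      have := (hTsub hx).2
      simp [Set.mem_Iic] at this
      omega
    haveI : Nonempty κ := ⟨f fun _ => 0⟩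
    let step : Set ℕ → ℕ × κ × Set ℕ := fun S' =>
      if h : S'.Infinite then (exists_next S' h).choose else Classical.arbitrary _
    have step_spec : ∀ (S' : Set ℕ) (h : S'.Infinite),
        (step S').1 ∈ S' ∧ (step S').2.2 ⊆ S' ∧ (step S').2.2.Infinite ∧
        (∀ x ∈ (step S').2.2, (step S').1 < x) ∧
        (∀ v : Fin k → ℕ, StrictMono v → (∀ i, v i ∈ (step S').2.2) →
          f (Fin.cons (step S').1 v) = (step S').2.1) := by
      intro S' h
      simp only [step, dif_pos h]
      exact (exists_next S' h).choose_spec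
    let g : ℕ → ℕ × κ × Set ℕ := fun n => Nat.rec (step S) (fun _ p => step p.2.2) n
    have g0 : g 0 = step S := rfl
    have gsucc : ∀ n, g (n+1) = step (g n).2.2 := fun n => rfl
    set a : ℕ → ℕ := fun n => (g n).1 with ha
    set c : ℕ → κ := fun n => (g n).2.1 with hc
    set T : ℕ → Set ℕ := fun n => (g n).2.2 with hT
    have hinf : ∀ n, (T n).Infinite := by
      intro n
      induction n with
      | zero => exact (step_spec S hS).2.2.1
      | succ n ih => show (step (g n).2.2).2.2.Infinite; exact (step_spec _ ih).2.2.1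
    have hP0 := step_spec S hS
    have hPs : ∀ n, (a (n+1)) ∈ T n ∧ T (n+1) ⊆ T n ∧ (∀ x ∈ T (n+1), a (n+1) < x) ∧
        (∀ v : Fin k → ℕ, StrictMono v → (∀ i, v i ∈ T (n+1)) →
          f (Fin.cons (a (n+1)) v) = c (n+1)) := by
      intro n
      have := step_spec _ (hinf n)
      rw [← gsucc n] at this
      exact ⟨this.1, this.2.1, this.2.2.2.1, this.2.2.2.2⟩
    have hHom : ∀ n, ∀ v : Fin k → ℕ, StrictMono v → (∀ i, v i ∈ T n) →
        f (Fin.cons (a n) v) = c n := by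
      intro n
      cases n with
      | zero => exact hP0.2.2.2.2
      | succ n => exact (hPs n).2.2.2
    have hTanti : ∀ m n, m ≤ n → T n ⊆ T m := by
      intro m n h
      induction n with
      | zero => cases Nat.le_zero.mp h; exact le_refl _
      | succ n ih =>
        rcases Nat.lt_or_ge m (n+1) with h' | h'
        · exact ((hPs n).2.1).trans (ih (by omega))
        · have : m = n + 1 := by omega
          subst this; exact le_refl _
    have haT : ∀ m n, m < n → a n ∈ T m := by
      intro m n h
      cases n with
      | zero => omega
      | succ n => exact hTanti m n (by omega) (hPs n).1
    have hamono : StrictMono a := by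
      apply strictMono_nat_of_lt_succ
      intro n
      cases n with
      | zero => exact hP0.2.2.2.1 _ (hPs 0).1
      | succ n => exact (hPs n).2.2.1 _ (hPs (n+1)).1
    have haS : ∀ n, a n ∈ S := by
      intro n
      cases n with
      | zero => exact hP0.1
      | succ n => exact hP0.2.1 (hTanti 0 n (Nat.zero_le _) (hPs n).1)
    obtain ⟨cs, hcs⟩ := Finite.exists_infinite_fiber c
    have hI : (c ⁻¹' {cs}).Infinite := by
      rw [← Set.infinite_coe_iff]; exact hcs
    refine ⟨a '' (c ⁻¹' {cs}), ?_, hI.image (hamono.injective.injOn), cs, ?_⟩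
    · rintro x ⟨n, _, rfl⟩; exact haS n
    · intro v hv hvT
      choose m hm hav using hvT
      have hmmono : StrictMono m := by
        intro i j hij
        have := hv hij
        rw [← hav i, ← hav j] at this
        exact hamono.lt_iff_lt.mp this
      have hv0 : v 0 = a (m 0) := (hav 0).symm
      have : v = Fin.cons (a (m 0)) (Fin.tail v) := by
        rw [← hv0]; exact (Fin.cons_self_tail v).symm
      rw [this]
      have := hHom (m 0) (Fin.tail v)
        (fun i j hij => hv (Fin.succ_lt_succ_iff.mpr hij))
        (fun i => by
          rw [Fin.tail, ← hav i.succ]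
          exact haT (m 0) (m i.succ) (hmmono (Fin.succ_pos i)))
      rw [this]
      exact hm 0


private lemma boolIff {X : Prop} [Decidable X] {b : Bool} (h : decide X = b) : X ↔ b = true := by
  subst h; simp

theorem canonical_inf {α : Type*} (χ : Sym2 ℕ → α) (t : ℕ) (ht : 2 ≤ t) :
    ∃ S : Finset ℕ, S.card = t ∧
      ((∃ c, ∀ a ∈ S, ∀ b ∈ S, a ≠ b → χ s(a, b) = c) ∨
       (∀ a ∈ S, ∀ b ∈ S, ∀ c ∈ S, ∀ d ∈ S, a ≠ b → c ≠ d →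
          χ s(a, b) = χ s(c, d) → s(a, b) = s(c, d)) ∨
       (∀ a ∈ S, ∀ b ∈ S, ∀ c ∈ S, ∀ d ∈ S, a < b → c < d →
          (χ s(a, b) = χ s(c, d) ↔ b = d)) ∨
       (∀ a ∈ S, ∀ b ∈ S, ∀ c ∈ S, ∀ d ∈ S, a < b → c < d →
          (χ s(a, b) = χ s(c, d) ↔ a = c))) := by
  classical
  let f : (Fin 4 → ℕ) → (Bool × Bool × Bool × Bool × Bool × Bool) := fun v =>
    (decide (χ s(v 0, v 1) = χ s(v 2, v 3)), decide (χ s(v 0, v 2) = χ s(v 1, v 3)),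
      decide (χ s(v 0, v 3) = χ s(v 1, v 2)), decide (χ s(v 0, v 1) = χ s(v 0, v 2)),
      decide (χ s(v 0, v 1) = χ s(v 1, v 2)), decide (χ s(v 0, v 2) = χ s(v 1, v 2)))
  obtain ⟨T, -, hTinf, p, hhom⟩ := ramseyTuple 4 f Set.univ Set.infinite_univ
  obtain ⟨p1, p2, p3, p4, p5, p6⟩ := p
  have fresh : ∀ m : ℕ, ∃ x ∈ T, m < x := by
    intro m
    obtain ⟨x, hx⟩ := (hTinf.diff (Set.finite_Iic m)).nonempty
    exact ⟨x, hx.1, by simpa using hx.2⟩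
  have hA : ∀ a b c d : ℕ, a ∈ T → b ∈ T → c ∈ T → d ∈ T → a < b → b < c → c < d →
      ((χ s(a,b) = χ s(c,d)) ↔ p1 = true) ∧ ((χ s(a,c) = χ s(b,d)) ↔ p2 = true) ∧
      ((χ s(a,d) = χ s(b,c)) ↔ p3 = true) ∧ ((χ s(a,b) = χ s(a,c)) ↔ p4 = true) ∧
      ((χ s(a,b) = χ s(b,c)) ↔ p5 = true) ∧ ((χ s(a,c) = χ s(b,c)) ↔ p6 = true) := by
    intro a b c d haT hbT hcT hdT h1 h2 h3
    have hsm : StrictMono ![a,b,c,d] := by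
      intro i j hij
      fin_cases i <;> fin_cases j <;> simp_all <;> omega
    have hmem : ∀ i, ![a,b,c,d] i ∈ T := by
      intro i; fin_cases i <;> simpa
    have hf := hhom ![a,b,c,d] hsm hmem
    have h : decide (χ s(a,b) = χ s(c,d)) = p1 ∧ decide (χ s(a,c) = χ s(b,d)) = p2 ∧
        decide (χ s(a,d) = χ s(b,c)) = p3 ∧ decide (χ s(a,b) = χ s(a,c)) = p4 ∧
        decide (χ s(a,b) = χ s(b,c)) = p5 ∧ decide (χ s(a,c) = χ s(b,c)) = p6 := by
      simp only [f, Prod.mk.injEq] at hf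
      exact hf
    exact ⟨boolIff h.1, boolIff h.2.1, boolIff h.2.2.1, boolIff h.2.2.2.1,
      boolIff h.2.2.2.2.1, boolIff h.2.2.2.2.2⟩
  have hB : ∀ a b c : ℕ, a ∈ T → b ∈ T → c ∈ T → a < b → b < c →
      ((χ s(a,b) = χ s(a,c)) ↔ p4 = true) ∧ ((χ s(a,b) = χ s(b,c)) ↔ p5 = true) ∧
      ((χ s(a,c) = χ s(b,c)) ↔ p6 = true) := by
    intro a b c haT hbT hcT h1 h2
    obtain ⟨d, hdT, hd⟩ := fresh c
    have h := hA a b c d haT hbT hcT hdT h1 h2 hd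
    exact ⟨h.2.2.2.1, h.2.2.2.2.1, h.2.2.2.2.2⟩
  -- six increasing points in T
  obtain ⟨x1, hT1, -⟩ := fresh 0
  obtain ⟨x2, hT2, h12⟩ := fresh x1
  obtain ⟨x3, hT3, h23⟩ := fresh x2
  obtain ⟨x4, hT4, h34⟩ := fresh x3
  obtain ⟨x5, hT5, h45⟩ := fresh x4
  obtain ⟨x6, hT6, h56⟩ := fresh x5
  have hp5p1 : p5 = true → p1 = true := by
    intro hp
    have e1 : χ s(x1,x2) = χ s(x2,x3) := (hB x1 x2 x3 hT1 hT2 hT3 h12 h23).2.1.mpr hp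
    have e2 : χ s(x2,x3) = χ s(x3,x4) := (hB x2 x3 x4 hT2 hT3 hT4 h23 h34).2.1.mpr hp
    exact (hA x1 x2 x3 x4 hT1 hT2 hT3 hT4 h12 h23 h34).1.mp (e1.trans e2)
  have hp2p5 : p2 = true → p5 = true := by
    intro hp
    have e1 : χ s(x1,x3) = χ s(x2,x4) := (hA x1 x2 x3 x4 hT1 hT2 hT3 hT4 h12 h23 h34).2.1.mpr hp
    have e2 : χ s(x2,x4) = χ s(x3,x5) := (hA x2 x3 x4 x5 hT2 hT3 hT4 hT5 h23 h34 h45).2.1.mpr hp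
    exact (hB x1 x3 x5 hT1 hT3 hT5 (h12.trans h23) (h34.trans h45)).2.1.mp (e1.trans e2)
  have hp3p1 : p3 = true → p1 = true := by
    intro hp
    have e1 : χ s(x1,x6) = χ s(x2,x3) :=
      (hA x1 x2 x3 x6 hT1 hT2 hT3 hT6 h12 h23 ((h34.trans h45).trans h56)).2.2.1.mpr hp
    have e2 : χ s(x1,x6) = χ s(x4,x5) :=
      (hA x1 x4 x5 x6 hT1 hT4 hT5 hT6 ((h12.trans h23).trans h34) h45 h56).2.2.1.mpr hp
    exact (hA x2 x3 x4 x5 hT2 hT3 hT4 hT5 h23 h34 h45).1.mp (e1.symm.trans e2)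
  have hp4p6 : p4 = true → p6 = true → p5 = true := by
    intro hp4 hp6
    have e1 : χ s(x1,x2) = χ s(x1,x3) := (hB x1 x2 x3 hT1 hT2 hT3 h12 h23).1.mpr hp4
    have e2 : χ s(x1,x3) = χ s(x2,x3) := (hB x1 x2 x3 hT1 hT2 hT3 h12 h23).2.2.mpr hp6
    exact (hB x1 x2 x3 hT1 hT2 hT3 h12 h23).2.1.mp (e1.trans e2)
  obtain ⟨S, hSsub, hScard⟩ := hTinf.exists_subset_card_eq t
  have hST : ∀ a ∈ S, a ∈ T := fun a ha => hSsub (Finset.mem_coe.mpr ha)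
  refine ⟨S, hScard, ?_⟩
  by_cases hcase : p1 = true ∨ p2 = true ∨ p3 = true ∨ p5 = true
  · -- monochromatic
    have hp1 : p1 = true := by
      rcases hcase with h | h | h | h
      · exact h
      · exact hp5p1 (hp2p5 h)
      · exact hp3p1 h
      · exact hp5p1 h
    have key : ∀ a b : ℕ, a ∈ T → b ∈ T → a ≠ b →
        ∃ a' b', a' ∈ T ∧ b' ∈ T ∧ a' < b' ∧ s(a,b) = s(a',b') := by
      intro a b ha hb hab
      rcases lt_or_gt_of_ne hab with h | h
      · exact ⟨a, b, ha, hb, h, rfl⟩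
      · exact ⟨b, a, hb, ha, h, Sym2.eq_swap⟩
    have hmono : ∀ a b c d : ℕ, a ∈ T → b ∈ T → c ∈ T → d ∈ T → a < b → c < d →
        χ s(a,b) = χ s(c,d) := by
      intro a b c d haT hbT hcT hdT hab hcd
      obtain ⟨x, hxT, hx⟩ := fresh (max b d)
      obtain ⟨y, hyT, hy⟩ := fresh x
      have e1 := (hA a b x y haT hbT hxT hyT hab (by omega) hy).1.mpr hp1
      have e2 := (hA c d x y hcT hdT hxT hyT hcd (by omega) hy).1.mpr hp1
      rw [e1, e2]
    have hmono' : ∀ a b c d : ℕ, a ∈ T → b ∈ T → c ∈ T → d ∈ T → a ≠ b → c ≠ d →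
        χ s(a,b) = χ s(c,d) := by
      intro a b c d haT hbT hcT hdT hab hcd
      obtain ⟨a', b', ha', hb', hab', hs1⟩ := key a b haT hbT hab
      obtain ⟨c', d', hc', hd', hcd', hs2⟩ := key c d hcT hdT hcd
      rw [hs1, hs2]
      exact hmono a' b' c' d' ha' hb' hc' hd' hab' hcd'
    obtain ⟨u, hu, w, hw, huw⟩ := Finset.one_lt_card.mp (by omega : 1 < S.card)
    refine Or.inl ⟨χ s(u, w), ?_⟩
    intro a ha b hb hab
    exact hmono' a b u w (hST a ha) (hST b hb) (hST u hu) (hST w hw) hab huw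
  · push_neg at hcase
    obtain ⟨h1, h2, h3, h5⟩ := hcase
    have q1 : p1 = false := Bool.not_eq_true _ ▸ h1
    have q2 : p2 = false := Bool.not_eq_true _ ▸ h2
    have q3 : p3 = false := Bool.not_eq_true _ ▸ h3
    have q5 : p5 = false := Bool.not_eq_true _ ▸ h5
    have classify : ∀ a b c d : ℕ, a ∈ T → b ∈ T → c ∈ T → d ∈ T → a < b → c < d →
        χ s(a,b) = χ s(c,d) →
        (a = c ∧ b = d) ∨ (a = c ∧ p4 = true) ∨ (b = d ∧ p6 = true) := by
      intro a b c d haT hbT hcT hdT hab hcd heq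
      rcases lt_trichotomy a c with h | h | h
      · rcases lt_trichotomy b c with h' | h' | h'
        · exact absurd ((hA a b c d haT hbT hcT hdT hab h' hcd).1.mp heq) (by simp [q1])
        · subst h'
          exact absurd ((hB a b d haT hbT hdT hab hcd).2.1.mp heq) (by simp [q5])
        · rcases lt_trichotomy b d with h'' | h'' | h''
          · exact absurd ((hA a c b d haT hcT hbT hdT h h' h'').2.1.mp heq) (by simp [q2])
          · subst h''
            exact Or.inr (Or.inr ⟨rfl, (hB a c b haT hcT hbT h h').2.2.mp heq⟩)
          · exact absurd ((hA a c d b haT hcT hdT hbT h hcd h'').2.2.1.mp heq) (by simp [q3])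
      · subst h
        rcases lt_trichotomy b d with h' | h' | h'
        · exact Or.inr (Or.inl ⟨rfl, (hB a b d haT hbT hdT hab h').1.mp heq⟩)
        · exact Or.inl ⟨rfl, h'⟩
        · exact Or.inr (Or.inl ⟨rfl, (hB a d b haT hdT hbT hcd h').1.mp heq.symm⟩)
      · rcases lt_trichotomy d a with h' | h' | h'
        · exact absurd ((hA c d a b hcT hdT haT hbT hcd h' hab).1.mp heq.symm) (by simp [q1])
        · subst h'
          exact absurd ((hB c d b hcT hdT hbT hcd hab).2.1.mp heq.symm) (by simp [q5])
        · rcases lt_trichotomy d b with h'' | h'' | h''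
          · exact absurd ((hA c a d b hcT haT hdT hbT h h' h'').2.1.mp heq.symm) (by simp [q2])
          · subst h''
            exact Or.inr (Or.inr ⟨rfl, (hB c a d hcT haT hbT h hab).2.2.mp heq.symm⟩)
          · exact absurd ((hA c a b d hcT haT hbT hdT h hab h'').2.2.1.mp heq.symm) (by simp [q3])
    rcases Bool.eq_false_or_eq_true p4 with q4 | q4
    · rcases Bool.eq_false_or_eq_true p6 with q6 | q6
      · exact absurd (hp5p1 (hp4p6 q4 q6)) (by simp [q1])
      · -- lower lexical (p4 = true, p6 = false)
        refine Or.inr (Or.inr (Or.inr ?_))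
        intro a ha b hb c hc d hd hab hcd
        constructor
        · intro heq
          rcases classify a b c d (hST a ha) (hST b hb) (hST c hc) (hST d hd) hab hcd heq with
            ⟨hh, -⟩ | ⟨hh, -⟩ | ⟨-, hp⟩
          · exact hh
          · exact hh
          · simp [q6] at hp
        · intro hac
          subst hac
          rcases lt_trichotomy b d with h | h | h
          · exact (hB a b d (hST a ha) (hST b hb) (hST d hd) hab h).1.mpr q4
          · rw [h]
          · exact ((hB a d b (hST a ha) (hST d hd) (hST b hb) hcd h).1.mpr q4).symm
    · rcases Bool.eq_false_or_eq_true p6 with q6 | q6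
      · -- upper lexical (p6 = true, p4 = false)
        refine Or.inr (Or.inr (Or.inl ?_))
        intro a ha b hb c hc d hd hab hcd
        constructor
        · intro heq
          rcases classify a b c d (hST a ha) (hST b hb) (hST c hc) (hST d hd) hab hcd heq with
            ⟨-, hh⟩ | ⟨-, hp⟩ | ⟨hh, -⟩
          · exact hh
          · simp [q4] at hp
          · exact hh
        · intro hbd
          subst hbd
          rcases lt_trichotomy a c with h | h | h
          · exact (hB a c b (hST a ha) (hST c hc) (hST b hb) h hcd).2.2.mpr q6
          · rw [h]
          · exact ((hB c a b (hST c hc) (hST a ha) (hST b hb) h hab).2.2.mpr q6).symm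
      · -- rainbow (p4 = p6 = false)
        have key : ∀ a b : ℕ, a ∈ T → b ∈ T → a ≠ b →
            ∃ a' b', a' ∈ T ∧ b' ∈ T ∧ a' < b' ∧ s(a,b) = s(a',b') := by
          intro a b ha hb hab
          rcases lt_or_gt_of_ne hab with h | h
          · exact ⟨a, b, ha, hb, h, rfl⟩
          · exact ⟨b, a, hb, ha, h, Sym2.eq_swap⟩
        refine Or.inr (Or.inl ?_)
        intro a ha b hb c hc d hd hab hcd heq
        obtain ⟨a', b', ha', hb', hab', hs1⟩ := key a b (hST a ha) (hST b hb) hab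
        obtain ⟨c', d', hc', hd', hcd', hs2⟩ := key c d (hST c hc) (hST d hd) hcd
        have heq' : χ s(a',b') = χ s(c',d') := by rw [← hs1, ← hs2]; exact heq
        rcases classify a' b' c' d' ha' hb' hc' hd' hab' hcd' heq' with
          ⟨hh1, hh2⟩ | ⟨-, hp⟩ | ⟨-, hp⟩
        · rw [hs1, hs2, hh1, hh2]
        · simp [q4] at hp
        · simp [q6] at hp


/-- The Erdős–Rado canonical Ramsey theorem for ordered vertex sets. -/
theorem statement_12 :
    ∀ t : ℕ, ∃ n : ℕ, ∀ χ : Sym2 (Fin n) → ℕ,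
      ∃ S : Finset (Fin n), S.card = t ∧
        ((∃ c, ∀ a ∈ S, ∀ b ∈ S, a ≠ b → χ s(a, b) = c) ∨
         (∀ a ∈ S, ∀ b ∈ S, ∀ c ∈ S, ∀ d ∈ S, a ≠ b → c ≠ d →
            χ s(a, b) = χ s(c, d) → s(a, b) = s(c, d)) ∨
         (∀ a ∈ S, ∀ b ∈ S, ∀ c ∈ S, ∀ d ∈ S, a < b → c < d →
            (χ s(a, b) = χ s(c, d) ↔ b = d)) ∨
         (∀ a ∈ S, ∀ b ∈ S, ∀ c ∈ S, ∀ d ∈ S, a < b → c < d →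
            (χ s(a, b) = χ s(c, d) ↔ a = c))) := by
  intro t
  rcases le_or_gt t 1 with ht | ht
  · -- trivial cases t ≤ 1
    refine ⟨t, fun χ => ⟨Finset.univ, by simp, Or.inl ⟨0, ?_⟩⟩⟩
    intro a _ b _ hab
    exact absurd (Fin.ext (by omega)) hab
  · by_contra hcon
    push_neg at hcon
    -- hcon : ∀ n, ∃ χ, ∀ S, ¬ ...
    choose χs hχs using hcon
    classical
    haveI : (Filter.cofinite : Filter ℕ).NeBot := by
      rw [Nat.cofinite_eq_atTop]; infer_instance
    set U : Ultrafilter ℕ := Ultrafilter.of Filter.cofinite with hU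
    let π : (n : ℕ) → ℕ → Fin (n+1) := fun n x => ⟨min x n, by omega⟩
    let ψ : ℕ → Sym2 ℕ → ℕ := fun n e => χs (n+1) (Sym2.map (π n) e)
    let R : Sym2 ℕ → Sym2 ℕ → Prop := fun e e' => ∀ᶠ n in (U : Filter ℕ), ψ n e = ψ n e'
    have hRequiv : Equivalence R :=
      ⟨fun e => Filter.Eventually.of_forall (fun n => rfl),
       fun h => h.mono (fun n hn => hn.symm),
       fun h h' => (h.and h').mono (fun n hn => hn.1.trans hn.2)⟩
    let st : Setoid (Sym2 ℕ) := ⟨R, hRequiv⟩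
    let χinf : Sym2 ℕ → Quotient st := fun e => Quotient.mk st e
    have hQ : ∀ e e', (χinf e = χinf e') ↔ R e e' := by
      intro e e'
      exact ⟨fun h => Quotient.exact h, fun h => Quotient.sound h⟩
    obtain ⟨S, hcard, halt⟩ := canonical_inf χinf t (by omega)
    set m : ℕ := S.sup id with hm
    have hSm : ∀ a ∈ S, a ≤ m := fun a ha => Finset.le_sup (f := id) ha
    have hE1 : ∀ᶠ n in (U : Filter ℕ), m ≤ n := by
      apply Filter.Eventually.filter_mono (Ultrafilter.of_le _)
      rw [Nat.cofinite_eq_atTop]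
      exact Filter.eventually_ge_atTop m
    have hE2 : ∀ᶠ n in (U : Filter ℕ), ∀ a ∈ S, ∀ b ∈ S, ∀ c ∈ S, ∀ d ∈ S,
        ((χinf s(a,b) = χinf s(c,d)) ↔ ψ n s(a,b) = ψ n s(c,d)) := by
      rw [Filter.eventually_all_finset]
      intro a _
      rw [Filter.eventually_all_finset]
      intro b _
      rw [Filter.eventually_all_finset]
      intro c _
      rw [Filter.eventually_all_finset]
      intro d _
      by_cases hq : χinf s(a,b) = χinf s(c,d)
      · have hR : R s(a,b) s(c,d) := (hQ _ _).mp hq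
        exact hR.mono (fun n hn => by simp [hq, hn])
      · have hnR : ¬ R s(a,b) s(c,d) := fun hR => hq ((hQ _ _).mpr hR)
        have : ∀ᶠ n in (U : Filter ℕ), ¬ (ψ n s(a,b) = ψ n s(c,d)) :=
          Ultrafilter.eventually_not.mpr hnR
        exact this.mono (fun n hn => by simp [hq, hn])
    obtain ⟨n, hmn, hiff⟩ := (hE1.and hE2).exists
    -- now transfer to Fin (n+1)
    have hlt : ∀ a ∈ S, a < n + 1 := fun a ha => by have := hSm a ha; omega
    have hπ : ∀ a ∈ S, (π n a : ℕ) = a := fun a ha => by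
      simp only [π]
      have := hSm a ha; simp; omega
    have hπinj : ∀ a ∈ S, ∀ b ∈ S, π n a = π n b → a = b := by
      intro a ha b hb h
      have h2 : ((π n a : Fin (n+1)) : ℕ) = ((π n b : Fin (n+1)) : ℕ) := congrArg Fin.val h
      rw [hπ a ha, hπ b hb] at h2
      exact h2
    have hπlt : ∀ a ∈ S, ∀ b ∈ S, (π n a < π n b ↔ a < b) := by
      intro a ha b hb
      rw [Fin.lt_def]
      rw [show ((π n a : ℕ)) = a from hπ a ha, show ((π n b : ℕ)) = b from hπ b hb]
    have hψ : ∀ a b : ℕ, ψ n s(a, b) = χs (n+1) s(π n a, π n b) := by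
      intro a b
      simp only [ψ, Sym2.map_pair_eq]
    set S' : Finset (Fin (n+1)) := S.image (π n) with hS'
    have hcard' : S'.card = t := by
      rw [hS', Finset.card_image_of_injOn (fun a ha b hb h => hπinj a ha b hb h), hcard]
    have hmem' : ∀ a' ∈ S', ∃ a ∈ S, π n a = a' := by
      intro a' ha'
      simpa using Finset.mem_image.mp ha'
    have hbad := hχs (n+1) S' hcard'
    rcases halt with ⟨c0, hc0⟩ | hrb | hul | hll
    · -- mono
      obtain ⟨u, hu, w, hw, huw⟩ := Finset.one_lt_card.mp (by omega : 1 < S.card)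
      have hmonoS : ∀ a' ∈ S', ∀ b' ∈ S', a' ≠ b' →
          χs (n+1) s(a', b') = χs (n+1) s(π n u, π n w) := by
        intro a' ha' b' hb' hab'
        obtain ⟨a, ha, rfl⟩ := hmem' a' ha'
        obtain ⟨b, hb, rfl⟩ := hmem' b' hb'
        have hab : a ≠ b := fun h => hab' (by rw [h])
        have e1 : χinf s(a,b) = χinf s(u,w) := by
          rw [hc0 a ha b hb hab, hc0 u hu w hw huw]
        have := (hiff a ha b hb u hu w hw).mp e1
        rw [hψ, hψ] at this
        exact this
      obtain ⟨a', ha', b', hb', hab', hne⟩ := hbad.1 (χs (n+1) s(π n u, π n w))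
      exact hne (hmonoS a' ha' b' hb' hab')
    · -- rainbow
      obtain ⟨a', ha', b', hb', c', hc', d', hd', hab', hcd', heq', hsne⟩ := hbad.2.1
      apply hsne
      obtain ⟨a, ha, rfl⟩ := hmem' a' ha'
      obtain ⟨b, hb, rfl⟩ := hmem' b' hb'
      obtain ⟨c, hc, rfl⟩ := hmem' c' hc'
      obtain ⟨d, hd, rfl⟩ := hmem' d' hd'
      have hab : a ≠ b := fun h => hab' (by rw [h])
      have hcd : c ≠ d := fun h => hcd' (by rw [h])
      have heq : χinf s(a,b) = χinf s(c,d) := by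
        apply (hiff a ha b hb c hc d hd).mpr
        rw [hψ, hψ]
        exact heq'
      have := hrb a ha b hb c hc d hd hab hcd heq
      have := congrArg (Sym2.map (π n)) this
      simpa [Sym2.map_pair_eq] using this
    · -- upper lexical
      obtain ⟨a', ha', b', hb', c', hc', d', hd', hab', hcd', hdisj⟩ := hbad.2.2.1
      obtain ⟨a, ha, rfl⟩ := hmem' a' ha'
      obtain ⟨b, hb, rfl⟩ := hmem' b' hb'
      obtain ⟨c, hc, rfl⟩ := hmem' c' hc'
      obtain ⟨d, hd, rfl⟩ := hmem' d' hd'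
      have hab : a < b := (hπlt a ha b hb).mp hab'
      have hcd : c < d := (hπlt c hc d hd).mp hcd'
      rcases hdisj with ⟨heq', hne⟩ | ⟨hne', heq⟩
      · apply hne
        have heq : χinf s(a,b) = χinf s(c,d) := by
          apply (hiff a ha b hb c hc d hd).mpr; rw [hψ, hψ]; exact heq'
        rw [(hul a ha b hb c hc d hd hab hcd).mp heq]
      · apply hne'
        have hbd : b = d := hπinj b hb d hd heq
        have heq2 := (hul a ha b hb c hc d hd hab hcd).mpr hbd
        have := (hiff a ha b hb c hc d hd).mp heq2
        rw [hψ, hψ] at this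
        exact this
    · -- lower lexical
      obtain ⟨a', ha', b', hb', c', hc', d', hd', hab', hcd', hdisj⟩ := hbad.2.2.2
      obtain ⟨a, ha, rfl⟩ := hmem' a' ha'
      obtain ⟨b, hb, rfl⟩ := hmem' b' hb'
      obtain ⟨c, hc, rfl⟩ := hmem' c' hc'
      obtain ⟨d, hd, rfl⟩ := hmem' d' hd'
      have hab : a < b := (hπlt a ha b hb).mp hab'
      have hcd : c < d := (hπlt c hc d hd).mp hcd'
      rcases hdisj with ⟨heq', hne⟩ | ⟨hne', heq⟩
      · apply hne
        have heq : χinf s(a,b) = χinf s(c,d) := by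
          apply (hiff a ha b hb c hc d hd).mpr; rw [hψ, hψ]; exact heq'
        rw [(hll a ha b hb c hc d hd hab hcd).mp heq]
      · apply hne'
        have hac : a = c := hπinj a ha c hc heq
        have heq2 := (hll a ha b hb c hc d hd hab hcd).mpr hac
        have := (hiff a ha b hb c hc d hd).mp heq2
        rw [hψ, hψ] at this
        exact this
end
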